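/- Let Γ be the pineapple graph on n vertices with t ≥ 3 clique vertices, i.e., the threshold graph with string 01^{t−1}0^{n−t−1}1. The eigenvalues of the normalized adjacency matrix are 1, 0 with multiplicity n−t−2, −1/t with multiplicity t−1, and the two roots (1/(2t))[−1 ± √(1 + 4t(t−1)(n−t−1)/(n−1))]. -/

import Mathlib

open Matrix Polynomial BigOperators Finset

def thresholdGraph (n : ℕ) (b : Fin n → Bool) : SimpleGraph (Fin n) where
  Adj i j := i ≠ j ∧ b (max i j) = true
  symm := ⟨fun i j h => ⟨h.1.symm, by rw [max_comm]; exact h.2⟩⟩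
  loopless := ⟨fun i h => h.1 rfl⟩

instance (n : ℕ) (b : Fin n → Bool) : DecidableRel (thresholdGraph n b).Adj :=
  fun i j => inferInstanceAs (Decidable (i ≠ j ∧ b (max i j) = true))

noncomputable def NA {n : ℕ} (G : SimpleGraph (Fin n)) [DecidableRel G.Adj] :
    Matrix (Fin n) (Fin n) ℝ :=
  (Matrix.diagonal fun i => ((G.degree i : ℝ))⁻¹) * G.adjMatrix ℝ

def cum (s t : ℕ → ℕ) (i : ℕ) : ℕ := ∑ j ∈ Finset.range i, (s j + t j)

def isOne (k : ℕ) (s t : ℕ → ℕ) (p : ℕ) : Bool :=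
  decide (∃ i < k, cum s t i + s i ≤ p ∧ p < cum s t i + s i + t i)

def TG (k : ℕ) (s t : ℕ → ℕ) : SimpleGraph (Fin (cum s t k)) :=
  thresholdGraph _ (fun p => isOne k s t p.val)

instance (k : ℕ) (s t : ℕ → ℕ) : DecidableRel (TG k s t).Adj :=
  inferInstanceAs (DecidableRel (thresholdGraph _ _).Adj)



-- helpers
lemma finSumBand {n : ℕ} (a b : ℕ) (c : ℝ) (hb : b ≤ n) :
    (∑ k : Fin n, if a ≤ k.val ∧ k.val < b then c else 0) = (b - a : ℕ) * c := by
  rw [Fin.sum_univ_eq_sum_range (fun m => if a ≤ m ∧ m < b then c else 0) n,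
    ← Finset.sum_filter]
  have h : (Finset.range n).filter (fun m => a ≤ m ∧ m < b) = Finset.Ico a b := by
    ext m; simp only [Finset.mem_filter, Finset.mem_range, Finset.mem_Ico]; omega
  rw [h, Finset.sum_const, Nat.card_Ico, nsmul_eq_mul]

lemma finSumPick {n : ℕ} (a : Fin n) (f : Fin n → ℝ) :
    (∑ k : Fin n, if k.val = a.val then f k else 0) = f a := by
  have h : ∀ k : Fin n, (if k.val = a.val then f k else 0) = if k = a then f k else 0 := by
    intro k; simp [Fin.val_eq_val]
  simp_rw [h]
  simp

lemma cardFilterFin {n : ℕ} (p : ℕ → Prop) [DecidablePred p] :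
    (Finset.univ.filter (fun i : Fin n => p i.val)).card = ((Finset.range n).filter p).card := by
  rw [Finset.card_filter, Finset.card_filter,
    Fin.sum_univ_eq_sum_range (fun m => if p m then 1 else 0) n]

def pb (n t : ℕ) : Fin n → Bool := fun p => decide ((1 ≤ p.val ∧ p.val < t) ∨ p.val = n - 1)

lemma val_max {n : ℕ} (i j : Fin n) : (max i j).val = max i.val j.val := by
  rcases le_total i j with h | h
  · rw [max_eq_right h, max_eq_right (by exact h)]
  · rw [max_eq_left h, max_eq_left (by exact h)]

lemma adj_iff (n t : ℕ) (i j : Fin n) :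
    (thresholdGraph n (pb n t)).Adj i j ↔
      (i.val ≠ j.val ∧ ((1 ≤ max i.val j.val ∧ max i.val j.val < t) ∨ max i.val j.val = n - 1)) := by
  change (i ≠ j ∧ pb n t (max i j) = true) ↔ _
  rw [pb, decide_eq_true_iff, val_max, ne_eq, ← Fin.val_eq_val, ← ne_eq]

lemma deg_eq (n t : ℕ) (ht : 3 ≤ t) (hn : t + 2 ≤ n) (i : Fin n) :
    (thresholdGraph n (pb n t)).degree i =
      if i.val < t then t else if i.val = n - 1 then n - 1 else 1 := by
  classical
  have hi := i.isLt
  rw [← SimpleGraph.card_neighborFinset_eq_degree, SimpleGraph.neighborFinset_eq_filter]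
  have h1 : Finset.univ.filter ((thresholdGraph n (pb n t)).Adj i) =
      Finset.univ.filter (fun j : Fin n =>
        (i.val ≠ j.val ∧ ((1 ≤ max i.val j.val ∧ max i.val j.val < t) ∨ max i.val j.val = n - 1))) :=
    Finset.filter_congr (fun j _ => by rw [adj_iff])
  rw [h1, cardFilterFin (fun m => i.val ≠ m ∧ ((1 ≤ max i.val m ∧ max i.val m < t) ∨ max i.val m = n - 1))]
  by_cases h2 : i.val < t
  · rw [if_pos h2]
    have h3 : (Finset.range n).filter
        (fun m => i.val ≠ m ∧ ((1 ≤ max i.val m ∧ max i.val m < t) ∨ max i.val m = n - 1)) =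
        insert (n-1) ((Finset.range t).erase i.val) := by
      ext m
      simp only [Finset.mem_filter, Finset.mem_range, Finset.mem_insert, Finset.mem_erase]
      omega
    rw [h3, Finset.card_insert_of_notMem (by simp only [Finset.mem_erase, Finset.mem_range]; omega),
      Finset.card_erase_of_mem (by simp only [Finset.mem_range]; omega), Finset.card_range]
    omega
  · rw [if_neg h2]
    by_cases h4 : i.val = n - 1
    · rw [if_pos h4]
      have h3 : (Finset.range n).filter
          (fun m => i.val ≠ m ∧ ((1 ≤ max i.val m ∧ max i.val m < t) ∨ max i.val m = n - 1)) =
          Finset.range (n-1) := by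
        ext m
        simp only [Finset.mem_filter, Finset.mem_range]
        omega
      rw [h3, Finset.card_range]
    · rw [if_neg h4]
      have h3 : (Finset.range n).filter
          (fun m => i.val ≠ m ∧ ((1 ≤ max i.val m ∧ max i.val m < t) ∨ max i.val m = n - 1)) =
          {n-1} := by
        ext m
        simp only [Finset.mem_filter, Finset.mem_range, Finset.mem_singleton]
        omega
      rw [h3, Finset.card_singleton]

noncomputable def Mf (n t a b : ℕ) : ℝ :=
  if a = b then 0
  else if a < t then (if b < t ∨ b = n - 1 then (t : ℝ)⁻¹ else 0)
  else if a = n - 1 then ((n : ℝ) - 1)⁻¹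
  else (if b = n - 1 then 1 else 0)

lemma NA_eq (n t : ℕ) (ht : 3 ≤ t) (hn : t + 2 ≤ n) (i j : Fin n) :
    NA (thresholdGraph n (pb n t)) i j = Mf n t i.val j.val := by
  have hi := i.isLt; have hj := j.isLt
  rw [NA, Matrix.diagonal_mul, SimpleGraph.adjMatrix_apply, deg_eq n t ht hn, Mf]
  simp only [adj_iff n t i j]
  by_cases hij : i.val = j.val
  · rw [if_pos hij, if_neg (by omega : ¬ (i.val ≠ j.val ∧ _)), mul_zero]
  · rw [if_neg hij]
    by_cases h2 : i.val < t
    · rw [if_pos h2, if_pos h2]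
      by_cases h3 : j.val < t ∨ j.val = n - 1
      · rw [if_pos h3, if_pos (by omega), mul_one]
      · rw [if_neg h3, if_neg (by omega), mul_zero]
    · rw [if_neg h2, if_neg h2]
      by_cases h4 : i.val = n - 1
      · rw [if_pos h4, if_pos h4, if_pos (by omega), mul_one]
        push_cast [(by omega : 1 ≤ n)]
        rfl
      · rw [if_neg h4, if_neg h4]
        by_cases h5 : j.val = n - 1
        · rw [if_pos h5, if_pos (by omega), mul_one, Nat.cast_one, inv_one]
        · rw [if_neg h5, if_neg (by omega), mul_zero]

noncomputable def Tf (n t k l : ℕ) : ℝ :=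
  if l = 0 then
    (if k = 0 then ((t:ℝ)-1)*(t:ℝ)⁻¹ else if k < t then (t:ℝ)⁻¹
     else if k = n-1 then ((n:ℝ)-1)⁻¹ else 0)
  else if l < t then (if k = l then -(t:ℝ)⁻¹ else 0)
  else if l = t then (if k = n-1 then ((n:ℝ)-1)⁻¹ else 0)
  else if l < n-1 then 0
  else (if k = 0 then 1 else if k < t then (t:ℝ)⁻¹ else if k = t then (n:ℝ)-(t:ℝ)-1
        else if k < n-1 then 1 else 0)

noncomputable def TP (n t : ℕ) : Matrix (Fin n) (Fin n) ℝ :=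
  Matrix.of fun k l => Tf n t k.val l.val

def EP (n t : ℕ) : Matrix (Fin n) (Fin n) ℝ :=
  Matrix.of fun i j =>
    if (i.val = 0 ∧ 1 ≤ j.val ∧ j.val < t) ∨ (i.val = t ∧ t < j.val ∧ j.val < n-1) then 1 else 0

lemma E2_eq (n t : ℕ) (ht : 3 ≤ t) : EP n t * EP n t = 0 := by
  ext i j
  rw [Matrix.mul_apply, Matrix.zero_apply]
  apply Finset.sum_eq_zero
  intro k _
  simp only [EP, Matrix.of_apply]
  split_ifs with h1 h2 <;> first | omega | ring

lemma PQ_eq (n t : ℕ) (ht : 3 ≤ t) : (1 - EP n t) * (1 + EP n t) = 1 := by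
  have h : (1 - EP n t) * (1 + EP n t) = 1 - EP n t * EP n t := by noncomm_ring
  rw [h, E2_eq n t ht, sub_zero]

lemma QP_eq (n t : ℕ) (ht : 3 ≤ t) : (1 + EP n t) * (1 - EP n t) = 1 := by
  have h : (1 + EP n t) * (1 - EP n t) = 1 - EP n t * EP n t := by noncomm_ring
  rw [h, E2_eq n t ht, sub_zero]

noncomputable def Af (n t j : ℕ) : ℝ :=
  if j = 0 ∨ j = n-1 then ((t:ℝ)-1)*(t:ℝ)⁻¹ else if j < t then -(t:ℝ)⁻¹ else 0

noncomputable def Bf (n t j : ℕ) : ℝ := if j = n-1 then (n:ℝ)-(t:ℝ)-2 else 0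

lemma castsub1 (n : ℕ) (h : 1 ≤ n) : ((n - 1 : ℕ) : ℝ) = (n : ℝ) - 1 := by
  rw [Nat.cast_sub h, Nat.cast_one]

lemma colA (n t : ℕ) (ht : 3 ≤ t) (hn : t + 2 ≤ n) (j : Fin n) :
    (∑ k : Fin n, if 1 ≤ k.val ∧ k.val < t then TP n t k j else 0) = Af n t j.val := by
  have hj := j.isLt
  by_cases hj0 : j.val = 0
  · have h : ∀ k : Fin n, (if 1 ≤ k.val ∧ k.val < t then TP n t k j else 0)
        = (if 1 ≤ k.val ∧ k.val < t then (t:ℝ)⁻¹ else 0) := by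
      intro k
      by_cases hk : 1 ≤ k.val ∧ k.val < t
      · rw [if_pos hk, if_pos hk]
        simp only [TP, Matrix.of_apply, Tf, hj0]
        rw [if_pos trivial, if_neg (by omega), if_pos hk.2]
      · rw [if_neg hk, if_neg hk]
    rw [Finset.sum_congr rfl (fun k _ => h k), finSumBand 1 t _ (by omega),
      castsub1 t (by omega), Af, hj0, if_pos (Or.inl rfl)]
  · by_cases hjt : j.val < t
    · have h : ∀ k : Fin n, (if 1 ≤ k.val ∧ k.val < t then TP n t k j else 0)
          = (if k.val = j.val then -(t:ℝ)⁻¹ else 0) := by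
        intro k
        by_cases hk : k.val = j.val
        · rw [if_pos hk, if_pos (by omega)]
          simp only [TP, Matrix.of_apply, Tf]
          rw [if_neg (by omega), if_pos (by omega), if_pos hk]
        · rw [if_neg hk]
          by_cases hb : 1 ≤ k.val ∧ k.val < t
          · rw [if_pos hb]
            simp only [TP, Matrix.of_apply, Tf]
            rw [if_neg (by omega), if_pos (by omega), if_neg hk]
          · rw [if_neg hb]
      rw [Finset.sum_congr rfl (fun k _ => h k), finSumPick j (fun _ => -(t:ℝ)⁻¹),
        Af, if_neg (by omega), if_pos hjt]
    · by_cases hjn : j.val = n - 1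
      · have h : ∀ k : Fin n, (if 1 ≤ k.val ∧ k.val < t then TP n t k j else 0)
            = (if 1 ≤ k.val ∧ k.val < t then (t:ℝ)⁻¹ else 0) := by
          intro k
          by_cases hk : 1 ≤ k.val ∧ k.val < t
          · rw [if_pos hk, if_pos hk]
            simp only [TP, Matrix.of_apply, Tf]
            rw [if_neg (by omega), if_neg (by omega), if_neg (by omega), if_neg (by omega),
              if_neg (by omega), if_pos hk.2]
          · rw [if_neg hk, if_neg hk]
        rw [Finset.sum_congr rfl (fun k _ => h k), finSumBand 1 t _ (by omega),
          castsub1 t (by omega), Af, if_pos (Or.inr hjn)]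
      · rw [Finset.sum_eq_zero, Af, if_neg (by omega), if_neg (by omega)]
        intro k _
        by_cases hk : 1 ≤ k.val ∧ k.val < t
        · rw [if_pos hk]
          simp only [TP, Matrix.of_apply, Tf]
          by_cases hjt' : j.val = t
          · rw [if_neg (by omega), if_neg (by omega), if_pos hjt', if_neg (by omega)]
          · rw [if_neg (by omega), if_neg (by omega), if_neg (by omega), if_pos (by omega)]
        · rw [if_neg hk]

lemma colB (n t : ℕ) (ht : 3 ≤ t) (hn : t + 2 ≤ n) (j : Fin n) :
    (∑ k : Fin n, if t + 1 ≤ k.val ∧ k.val < n - 1 then TP n t k j else 0) = Bf n t j.val := by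
  have hj := j.isLt
  by_cases hjn : j.val = n - 1
  · have h : ∀ k : Fin n, (if t + 1 ≤ k.val ∧ k.val < n - 1 then TP n t k j else 0)
        = (if t + 1 ≤ k.val ∧ k.val < n - 1 then (1:ℝ) else 0) := by
      intro k
      by_cases hk : t + 1 ≤ k.val ∧ k.val < n - 1
      · rw [if_pos hk, if_pos hk]
        simp only [TP, Matrix.of_apply, Tf]
        rw [if_neg (by omega), if_neg (by omega), if_neg (by omega), if_neg (by omega),
          if_neg (by omega), if_neg (by omega), if_neg (by omega), if_pos hk.2]
      · rw [if_neg hk, if_neg hk]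
    rw [Finset.sum_congr rfl (fun k _ => h k), finSumBand (t+1) (n-1) _ (by omega),
      Bf, if_pos hjn, mul_one]
    rw [show n - 1 - (t + 1) = n - t - 2 from by omega, Nat.cast_sub (by omega),
      Nat.cast_sub (by omega)]
    norm_num
  · rw [Finset.sum_eq_zero, Bf, if_neg hjn]
    intro k _
    by_cases hk : t + 1 ≤ k.val ∧ k.val < n - 1
    · rw [if_pos hk]
      simp only [TP, Matrix.of_apply, Tf]
      by_cases hj0 : j.val = 0
      · rw [if_pos hj0, if_neg (by omega), if_neg (by omega), if_neg (by omega)]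
      · by_cases hjt : j.val < t
        · rw [if_neg hj0, if_pos hjt, if_neg (by omega)]
        · by_cases hjt' : j.val = t
          · rw [if_neg hj0, if_neg (by omega), if_pos hjt', if_neg (by omega)]
          · rw [if_neg hj0, if_neg (by omega), if_neg (by omega), if_pos (by omega)]
    · rw [if_neg hk]

lemma ME_eq (n t : ℕ) (ht : 3 ≤ t) (hn : t + 2 ≤ n) (i j : Fin n) :
    (NA (thresholdGraph n (pb n t)) * EP n t) i j =
      (if 1 ≤ j.val ∧ j.val < t then Mf n t i.val 0 else 0) +
      (if t < j.val ∧ j.val < n-1 then Mf n t i.val t else 0) := by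
  set G := thresholdGraph n (pb n t)
  rw [Matrix.mul_apply]
  by_cases hj1 : 1 ≤ j.val ∧ j.val < t
  · rw [if_pos hj1, if_neg (by omega), add_zero]
    have h : ∀ k : Fin n, NA G i k * EP n t k j
        = (if k.val = (⟨0, by omega⟩ : Fin n).val then NA G i k else 0) := by
      intro k
      simp only [EP, Matrix.of_apply]
      split_ifs with h1 h2 <;> first | omega | ring
    rw [Finset.sum_congr rfl (fun k _ => h k), finSumPick (⟨0, by omega⟩ : Fin n),
      NA_eq n t ht hn]
  · by_cases hj2 : t < j.val ∧ j.val < n - 1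
    · rw [if_neg hj1, if_pos hj2, zero_add]
      have h : ∀ k : Fin n, NA G i k * EP n t k j
          = (if k.val = (⟨t, by omega⟩ : Fin n).val then NA G i k else 0) := by
        intro k
        simp only [EP, Matrix.of_apply]
        split_ifs with h1 h2 <;> first | omega | ring
      rw [Finset.sum_congr rfl (fun k _ => h k), finSumPick (⟨t, by omega⟩ : Fin n),
        NA_eq n t ht hn]
    · rw [if_neg hj1, if_neg hj2, add_zero, Finset.sum_eq_zero]
      intro k _
      simp only [EP, Matrix.of_apply]
      rw [if_neg (by omega), mul_zero]

lemma ET_eq (n t : ℕ) (ht : 3 ≤ t) (hn : t + 2 ≤ n) (i j : Fin n) :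
    (EP n t * TP n t) i j =
      (if i.val = 0 then Af n t j.val else 0) + (if i.val = t then Bf n t j.val else 0) := by
  rw [Matrix.mul_apply]
  by_cases hi0 : i.val = 0
  · rw [if_pos hi0, if_neg (by omega), add_zero, ← colA n t ht hn j]
    apply Finset.sum_congr rfl
    intro k _
    simp only [EP, Matrix.of_apply]
    split_ifs with h1 h2 <;> first | omega | ring
  · by_cases hit : i.val = t
    · rw [if_neg hi0, if_pos hit, zero_add, ← colB n t ht hn j]
      apply Finset.sum_congr rfl
      intro k _
      simp only [EP, Matrix.of_apply]
      split_ifs with h1 h2 <;> first | omega | ring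
    · rw [if_neg hi0, if_neg hit, add_zero, Finset.sum_eq_zero]
      intro k _
      simp only [EP, Matrix.of_apply]
      rw [if_neg (by omega), zero_mul]


section evals
variable (n t a b k l : ℕ)

lemma Mf_eq (h : a = b) : Mf n t a b = 0 := by rw [Mf, if_pos h]
lemma Mf_ct1 (h1 : a ≠ b) (h2 : a < t) (h3 : b < t ∨ b = n-1) : Mf n t a b = (t:ℝ)⁻¹ := by
  rw [Mf, if_neg h1, if_pos h2, if_pos h3]
lemma Mf_ct0 (h1 : a ≠ b) (h2 : a < t) (h3 : ¬(b < t ∨ b = n-1)) : Mf n t a b = 0 := by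
  rw [Mf, if_neg h1, if_pos h2, if_neg h3]
lemma Mf_ap (h1 : a ≠ b) (h2 : ¬ a < t) (h3 : a = n-1) : Mf n t a b = ((n:ℝ)-1)⁻¹ := by
  rw [Mf, if_neg h1, if_neg h2, if_pos h3]
lemma Mf_p1 (h1 : a ≠ b) (h2 : ¬ a < t) (h3 : a ≠ n-1) (h4 : b = n-1) : Mf n t a b = 1 := by
  rw [Mf, if_neg h1, if_neg h2, if_neg h3, if_pos h4]
lemma Mf_p0 (h1 : a ≠ b) (h2 : ¬ a < t) (h3 : a ≠ n-1) (h4 : b ≠ n-1) : Mf n t a b = 0 := by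
  rw [Mf, if_neg h1, if_neg h2, if_neg h3, if_neg h4]

lemma Tf_c0_0 (h : k = 0) (hl : l = 0) : Tf n t k l = ((t:ℝ)-1)*(t:ℝ)⁻¹ := by
  rw [Tf, if_pos hl, if_pos h]
lemma Tf_c0_cl (h1 : k ≠ 0) (h2 : k < t) (hl : l = 0) : Tf n t k l = (t:ℝ)⁻¹ := by
  rw [Tf, if_pos hl, if_neg h1, if_pos h2]
lemma Tf_c0_ap (h1 : k ≠ 0) (h2 : ¬ k < t) (h3 : k = n-1) (hl : l = 0) :
    Tf n t k l = ((n:ℝ)-1)⁻¹ := by rw [Tf, if_pos hl, if_neg h1, if_neg h2, if_pos h3]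
lemma Tf_c0_z (h1 : k ≠ 0) (h2 : ¬ k < t) (h3 : k ≠ n-1) (hl : l = 0) : Tf n t k l = 0 := by
  rw [Tf, if_pos hl, if_neg h1, if_neg h2, if_neg h3]
lemma Tf_cm_d (hl1 : l ≠ 0) (hl2 : l < t) (h : k = l) : Tf n t k l = -(t:ℝ)⁻¹ := by
  rw [Tf, if_neg hl1, if_pos hl2, if_pos h]
lemma Tf_cm_z (hl1 : l ≠ 0) (hl2 : l < t) (h : k ≠ l) : Tf n t k l = 0 := by
  rw [Tf, if_neg hl1, if_pos hl2, if_neg h]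
lemma Tf_ct_ap (hl1 : l ≠ 0) (hl2 : ¬ l < t) (hl3 : l = t) (h : k = n-1) :
    Tf n t k l = ((n:ℝ)-1)⁻¹ := by rw [Tf, if_neg hl1, if_neg hl2, if_pos hl3, if_pos h]
lemma Tf_ct_z (hl1 : l ≠ 0) (hl2 : ¬ l < t) (hl3 : l = t) (h : k ≠ n-1) : Tf n t k l = 0 := by
  rw [Tf, if_neg hl1, if_neg hl2, if_pos hl3, if_neg h]
lemma Tf_cp (hl1 : l ≠ 0) (hl2 : ¬ l < t) (hl3 : l ≠ t) (hl4 : l < n-1) : Tf n t k l = 0 := by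
  rw [Tf, if_neg hl1, if_neg hl2, if_neg hl3, if_pos hl4]
lemma Tf_cl_0 (hl1 : l ≠ 0) (hl2 : ¬ l < t) (hl3 : l ≠ t) (hl4 : ¬ l < n-1) (h : k = 0) :
    Tf n t k l = 1 := by rw [Tf, if_neg hl1, if_neg hl2, if_neg hl3, if_neg hl4, if_pos h]
lemma Tf_cl_cl (hl1 : l ≠ 0) (hl2 : ¬ l < t) (hl3 : l ≠ t) (hl4 : ¬ l < n-1) (h1 : k ≠ 0)
    (h2 : k < t) : Tf n t k l = (t:ℝ)⁻¹ := by
  rw [Tf, if_neg hl1, if_neg hl2, if_neg hl3, if_neg hl4, if_neg h1, if_pos h2]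
lemma Tf_cl_t (hl1 : l ≠ 0) (hl2 : ¬ l < t) (hl3 : l ≠ t) (hl4 : ¬ l < n-1) (h1 : k ≠ 0)
    (h2 : ¬ k < t) (h3 : k = t) : Tf n t k l = (n:ℝ)-(t:ℝ)-1 := by
  rw [Tf, if_neg hl1, if_neg hl2, if_neg hl3, if_neg hl4, if_neg h1, if_neg h2, if_pos h3]
lemma Tf_cl_p (hl1 : l ≠ 0) (hl2 : ¬ l < t) (hl3 : l ≠ t) (hl4 : ¬ l < n-1) (h1 : k ≠ 0)
    (h2 : ¬ k < t) (h3 : k ≠ t) (h4 : k < n-1) : Tf n t k l = 1 := by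
  rw [Tf, if_neg hl1, if_neg hl2, if_neg hl3, if_neg hl4, if_neg h1, if_neg h2, if_neg h3,
    if_pos h4]
lemma Tf_cl_l (hl1 : l ≠ 0) (hl2 : ¬ l < t) (hl3 : l ≠ t) (hl4 : ¬ l < n-1) (h1 : k ≠ 0)
    (h2 : ¬ k < t) (h3 : k ≠ t) (h4 : ¬ k < n-1) : Tf n t k l = 0 := by
  rw [Tf, if_neg hl1, if_neg hl2, if_neg hl3, if_neg hl4, if_neg h1, if_neg h2, if_neg h3,
    if_neg h4]

lemma Af_1 (h : b = 0 ∨ b = n-1) : Af n t b = ((t:ℝ)-1)*(t:ℝ)⁻¹ := by rw [Af, if_pos h]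
lemma Af_2 (h1 : ¬(b = 0 ∨ b = n-1)) (h2 : b < t) : Af n t b = -(t:ℝ)⁻¹ := by
  rw [Af, if_neg h1, if_pos h2]
lemma Af_3 (h1 : ¬(b = 0 ∨ b = n-1)) (h2 : ¬ b < t) : Af n t b = 0 := by
  rw [Af, if_neg h1, if_neg h2]
lemma Bf_1 (h : b = n-1) : Bf n t b = (n:ℝ)-(t:ℝ)-2 := by rw [Bf, if_pos h]
lemma Bf_2 (h : b ≠ n-1) : Bf n t b = 0 := by rw [Bf, if_neg h]

end evals

lemma key_arith (n t : ℕ) (ht : 3 ≤ t) (hn : t + 2 ≤ n) (a c : ℕ) (ha : a < n) (hc : c < n) :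
    Mf n t a c - ((if 1 ≤ c ∧ c < t then Mf n t a 0 else 0) +
      (if t < c ∧ c < n-1 then Mf n t a t else 0))
    = Tf n t a c - ((if a = 0 then Af n t c else 0) + (if a = t then Bf n t c else 0)) := by
  have ht0 : (t:ℝ) ≠ 0 := Nat.cast_ne_zero.mpr (by omega)
  rcases (show a = 0 ∨ (1 ≤ a ∧ a < t) ∨ a = t ∨ (t < a ∧ a < n-1) ∨ a = n-1 by omega) with
    hA | hA | hA | hA | hA <;>
  rcases (show c = 0 ∨ (1 ≤ c ∧ c < t) ∨ c = t ∨ (t < c ∧ c < n-1) ∨ c = n-1 by omega) with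
    hC | hC | hC | hC | hC
  -- a = 0
  · rw [if_neg (by omega), if_neg (by omega), if_pos hA, if_neg (by omega),
      Mf_eq n t a c (by omega), Tf_c0_0 n t a c hA hC, Af_1 n t c (by omega)]
    ring
  · rw [if_pos hC, if_neg (by omega), if_pos hA, if_neg (by omega),
      Mf_ct1 n t a c (by omega) (by omega) (by omega), Mf_eq n t a 0 hA,
      Tf_cm_z n t a c (by omega) (by omega) (by omega), Af_2 n t c (by omega) (by omega)]
    ring
  · rw [if_neg (by omega), if_neg (by omega), if_pos hA, if_neg (by omega),
      Mf_ct0 n t a c (by omega) (by omega) (by omega),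
      Tf_ct_z n t a c (by omega) (by omega) hC (by omega), Af_3 n t c (by omega) (by omega)]
  · rw [if_neg (by omega), if_pos hC, if_pos hA, if_neg (by omega),
      Mf_ct0 n t a c (by omega) (by omega) (by omega),
      Mf_ct0 n t a t (by omega) (by omega) (by omega),
      Tf_cp n t a c (by omega) (by omega) (by omega) (by omega),
      Af_3 n t c (by omega) (by omega)]
  · rw [if_neg (by omega), if_neg (by omega), if_pos hA, if_neg (by omega),
      Mf_ct1 n t a c (by omega) (by omega) (by omega),
      Tf_cl_0 n t a c (by omega) (by omega) (by omega) (by omega) hA,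
      Af_1 n t c (by omega)]
    field_simp
    ring
  -- 1 ≤ a < t
  · rw [if_neg (by omega), if_neg (by omega), if_neg (by omega), if_neg (by omega),
      Mf_ct1 n t a c (by omega) (by omega) (by omega),
      Tf_c0_cl n t a c (by omega) (by omega) hC]
  · by_cases hac : a = c
    · rw [if_pos hC, if_neg (by omega), if_neg (by omega), if_neg (by omega),
        Mf_eq n t a c hac, Mf_ct1 n t a 0 (by omega) (by omega) (by omega),
        Tf_cm_d n t a c (by omega) (by omega) hac]
      ring
    · rw [if_pos hC, if_neg (by omega), if_neg (by omega), if_neg (by omega),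
        Mf_ct1 n t a c hac (by omega) (by omega),
        Mf_ct1 n t a 0 (by omega) (by omega) (by omega),
        Tf_cm_z n t a c (by omega) (by omega) hac]
      ring
  · rw [if_neg (by omega), if_neg (by omega), if_neg (by omega), if_neg (by omega),
      Mf_ct0 n t a c (by omega) (by omega) (by omega),
      Tf_ct_z n t a c (by omega) (by omega) hC (by omega)]
  · rw [if_neg (by omega), if_pos hC, if_neg (by omega), if_neg (by omega),
      Mf_ct0 n t a c (by omega) (by omega) (by omega),
      Mf_ct0 n t a t (by omega) (by omega) (by omega),
      Tf_cp n t a c (by omega) (by omega) (by omega) (by omega)]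
  · rw [if_neg (by omega), if_neg (by omega), if_neg (by omega), if_neg (by omega),
      Mf_ct1 n t a c (by omega) (by omega) (by omega),
      Tf_cl_cl n t a c (by omega) (by omega) (by omega) (by omega) (by omega) (by omega)]
  -- a = t
  · rw [if_neg (by omega), if_neg (by omega), if_neg (by omega), if_pos hA,
      Mf_p0 n t a c (by omega) (by omega) (by omega) (by omega),
      Tf_c0_z n t a c (by omega) (by omega) (by omega) hC, Bf_2 n t c (by omega)]
  · rw [if_pos hC, if_neg (by omega), if_neg (by omega), if_pos hA,
      Mf_p0 n t a c (by omega) (by omega) (by omega) (by omega),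
      Mf_p0 n t a 0 (by omega) (by omega) (by omega) (by omega),
      Tf_cm_z n t a c (by omega) (by omega) (by omega), Bf_2 n t c (by omega)]
  · rw [if_neg (by omega), if_neg (by omega), if_neg (by omega), if_pos hA,
      Mf_eq n t a c (by omega), Tf_ct_z n t a c (by omega) (by omega) hC (by omega),
      Bf_2 n t c (by omega)]
  · rw [if_neg (by omega), if_pos hC, if_neg (by omega), if_pos hA,
      Mf_p0 n t a c (by omega) (by omega) (by omega) (by omega),
      Mf_eq n t a t hA, Tf_cp n t a c (by omega) (by omega) (by omega) (by omega),
      Bf_2 n t c (by omega)]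
  · rw [if_neg (by omega), if_neg (by omega), if_neg (by omega), if_pos hA,
      Mf_p1 n t a c (by omega) (by omega) (by omega) hC,
      Tf_cl_t n t a c (by omega) (by omega) (by omega) (by omega) (by omega) (by omega) hA,
      Bf_1 n t c hC]
    ring
  -- t < a < n-1
  · rw [if_neg (by omega), if_neg (by omega), if_neg (by omega), if_neg (by omega),
      Mf_p0 n t a c (by omega) (by omega) (by omega) (by omega),
      Tf_c0_z n t a c (by omega) (by omega) (by omega) hC]
  · rw [if_pos hC, if_neg (by omega), if_neg (by omega), if_neg (by omega),
      Mf_p0 n t a c (by omega) (by omega) (by omega) (by omega),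
      Mf_p0 n t a 0 (by omega) (by omega) (by omega) (by omega),
      Tf_cm_z n t a c (by omega) (by omega) (by omega)]
  · rw [if_neg (by omega), if_neg (by omega), if_neg (by omega), if_neg (by omega),
      Mf_p0 n t a c (by omega) (by omega) (by omega) (by omega),
      Tf_ct_z n t a c (by omega) (by omega) hC (by omega)]
  · by_cases hac : a = c
    · rw [if_neg (by omega), if_pos hC, if_neg (by omega), if_neg (by omega),
        Mf_eq n t a c hac,
        Mf_p0 n t a t (by omega) (by omega) (by omega) (by omega),
        Tf_cp n t a c (by omega) (by omega) (by omega) (by omega)]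
    · rw [if_neg (by omega), if_pos hC, if_neg (by omega), if_neg (by omega),
        Mf_p0 n t a c hac (by omega) (by omega) (by omega),
        Mf_p0 n t a t (by omega) (by omega) (by omega) (by omega),
        Tf_cp n t a c (by omega) (by omega) (by omega) (by omega)]
  · rw [if_neg (by omega), if_neg (by omega), if_neg (by omega), if_neg (by omega),
      Mf_p1 n t a c (by omega) (by omega) (by omega) hC,
      Tf_cl_p n t a c (by omega) (by omega) (by omega) (by omega) (by omega) (by omega)
        (by omega) (by omega)]
  -- a = n-1
  · rw [if_neg (by omega), if_neg (by omega), if_neg (by omega), if_neg (by omega),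
      Mf_ap n t a c (by omega) (by omega) hA,
      Tf_c0_ap n t a c (by omega) (by omega) hA hC]
  · rw [if_pos hC, if_neg (by omega), if_neg (by omega), if_neg (by omega),
      Mf_ap n t a c (by omega) (by omega) hA,
      Mf_ap n t a 0 (by omega) (by omega) hA,
      Tf_cm_z n t a c (by omega) (by omega) (by omega)]
    ring
  · rw [if_neg (by omega), if_neg (by omega), if_neg (by omega), if_neg (by omega),
      Mf_ap n t a c (by omega) (by omega) hA,
      Tf_ct_ap n t a c (by omega) (by omega) hC hA]
  · rw [if_neg (by omega), if_pos hC, if_neg (by omega), if_neg (by omega),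
      Mf_ap n t a c (by omega) (by omega) hA,
      Mf_ap n t a t (by omega) (by omega) hA,
      Tf_cp n t a c (by omega) (by omega) (by omega) (by omega)]
    ring
  · rw [if_neg (by omega), if_neg (by omega), if_neg (by omega), if_neg (by omega),
      Mf_eq n t a c (by omega),
      Tf_cl_l n t a c (by omega) (by omega) (by omega) (by omega) (by omega) (by omega)
        (by omega) (by omega)]

lemma MP_eq (n t : ℕ) (ht : 3 ≤ t) (hn : t + 2 ≤ n) :
    NA (thresholdGraph n (pb n t)) * (1 - EP n t) = (1 - EP n t) * TP n t := by
  ext i j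
  rw [Matrix.mul_sub, Matrix.sub_mul, Matrix.mul_one, Matrix.one_mul,
    Matrix.sub_apply, Matrix.sub_apply, ME_eq n t ht hn, ET_eq n t ht hn,
    NA_eq n t ht hn]
  show _ = Tf n t i.val j.val - _
  exact key_arith n t ht hn i.val j.val i.isLt j.isLt

lemma charpoly_conj {m : Type*} [Fintype m] [DecidableEq m] (P Q M : Matrix m m ℝ)
    (h1 : P * Q = 1) : (P * M * Q).charpoly = M.charpoly := by
  have hkey : charmatrix (P * M * Q) =
      P.map (C : ℝ →+* ℝ[X]) * charmatrix M * Q.map (C : ℝ →+* ℝ[X]) := by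
    rw [charmatrix, charmatrix, Matrix.mul_sub, Matrix.sub_mul]
    congr 1
    · have hc : P.map (C : ℝ →+* ℝ[X]) * Matrix.scalar m (X : ℝ[X]) =
          Matrix.scalar m (X : ℝ[X]) * P.map (C : ℝ →+* ℝ[X]) :=
        (scalar_commute (X : ℝ[X]) (fun r => Commute.all _ r) _).symm
      rw [hc, mul_assoc, ← Matrix.map_mul, h1, Matrix.map_one _ (map_zero _) (map_one _),
        mul_one]
    · simp only [RingHom.mapMatrix_apply, Matrix.map_mul]
  have hdet : (P.map (C : ℝ →+* ℝ[X])).det * (Q.map (C : ℝ →+* ℝ[X])).det = 1 := by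
    rw [← det_mul, ← Matrix.map_mul, h1, Matrix.map_one _ (map_zero _) (map_one _), det_one]
  rw [Matrix.charpoly, Matrix.charpoly, hkey, det_mul, det_mul]
  calc (P.map (C : ℝ →+* ℝ[X])).det * (charmatrix M).det * (Q.map (C : ℝ →+* ℝ[X])).det
      = (charmatrix M).det * ((P.map (C : ℝ →+* ℝ[X])).det * (Q.map (C : ℝ →+* ℝ[X])).det) := by
        ring
    _ = (charmatrix M).det := by rw [hdet, mul_one]

lemma NA_decomp (n t : ℕ) (ht : 3 ≤ t) (hn : t + 2 ≤ n) :
    NA (thresholdGraph n (pb n t)) = (1 - EP n t) * TP n t * (1 + EP n t) := by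
  calc NA (thresholdGraph n (pb n t))
      = NA (thresholdGraph n (pb n t)) * ((1 - EP n t) * (1 + EP n t)) := by
        rw [PQ_eq n t ht, mul_one]
    _ = (NA (thresholdGraph n (pb n t)) * (1 - EP n t)) * (1 + EP n t) := by rw [mul_assoc]
    _ = (1 - EP n t) * TP n t * (1 + EP n t) := by rw [MP_eq n t ht hn]

lemma charpoly_NA (n t : ℕ) (ht : 3 ≤ t) (hn : t + 2 ≤ n) :
    (NA (thresholdGraph n (pb n t))).charpoly = (TP n t).charpoly := by
  rw [NA_decomp n t ht hn, charpoly_conj _ _ _ (PQ_eq n t ht)]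

def bfun (n t : ℕ) : Fin n → ℕ :=
  fun l => if l.val = 0 ∨ l.val = t ∨ l.val = n-1 then 1 else 0

lemma bfun_eq_zero (n t : ℕ) (i : Fin n) :
    bfun n t i = 0 ↔ ¬(i.val = 0 ∨ i.val = t ∨ i.val = n-1) := by
  rw [bfun]
  split_ifs with h <;> simp [h]

lemma bfun_eq_one (n t : ℕ) (i : Fin n) :
    bfun n t i = 1 ↔ (i.val = 0 ∨ i.val = t ∨ i.val = n-1) := by
  rw [bfun]
  split_ifs with h <;> simp [h]

lemma TP_offblock (n t : ℕ) (ht : 3 ≤ t) (hn : t + 2 ≤ n) (i j : Fin n)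
    (hj : ¬(j.val = 0 ∨ j.val = t ∨ j.val = n-1)) (hij : i.val ≠ j.val) : TP n t i j = 0 := by
  have hj' := j.isLt
  show Tf n t i.val j.val = 0
  by_cases hjt : j.val < t
  · exact Tf_cm_z n t i.val j.val (by omega) hjt hij
  · exact Tf_cp n t i.val j.val (by omega) hjt (by omega) (by omega)

lemma TP_bt (n t : ℕ) (ht : 3 ≤ t) (hn : t + 2 ≤ n) :
    (TP n t).BlockTriangular (bfun n t) := by
  intro i j h
  have h1 : bfun n t i = 1 ∨ bfun n t i = 0 := by rw [bfun]; split_ifs <;> simp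
  have h2 : bfun n t j = 1 ∨ bfun n t j = 0 := by rw [bfun]; split_ifs <;> simp
  have hbj : bfun n t j = 0 := by omega
  have hbi : bfun n t i = 1 := by omega
  apply TP_offblock n t ht hn i j ((bfun_eq_zero n t j).mp hbj)
  have hb1 := (bfun_eq_one n t i).mp hbi
  have hb2 := (bfun_eq_zero n t j).mp hbj
  omega

lemma image_bfun (n t : ℕ) (ht : 3 ≤ t) (hn : t + 2 ≤ n) :
    Finset.image (bfun n t) Finset.univ = {0, 1} := by
  ext x
  simp only [Finset.mem_image, Finset.mem_insert, Finset.mem_singleton]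
  constructor
  · rintro ⟨i, -, rfl⟩
    rw [bfun]
    split_ifs <;> simp
  · rintro (rfl | rfl)
    · exact ⟨⟨1, by omega⟩, Finset.mem_univ _, by rw [bfun]; simp; omega⟩
    · exact ⟨⟨0, by omega⟩, Finset.mem_univ _, by rw [bfun]; simp⟩

lemma charpoly_TP_split (n t : ℕ) (ht : 3 ≤ t) (hn : t + 2 ≤ n) :
    (TP n t).charpoly = ((TP n t).toSquareBlock (bfun n t) 0).charpoly *
      ((TP n t).toSquareBlock (bfun n t) 1).charpoly := by
  rw [(TP_bt n t ht hn).charpoly, image_bfun n t ht hn]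
  rw [Finset.prod_insert (by norm_num), Finset.prod_singleton]

lemma block0_diag (n t : ℕ) (ht : 3 ≤ t) (hn : t + 2 ≤ n) :
    (TP n t).toSquareBlock (bfun n t) 0 =
      Matrix.diagonal (fun i : {a : Fin n // bfun n t a = 0} => Tf n t i.1.val i.1.val) := by
  ext i j
  rw [Matrix.toSquareBlock_def]
  by_cases hij : i = j
  · subst hij
    rw [Matrix.diagonal_apply_eq, Matrix.of_apply]
    rfl
  · rw [Matrix.diagonal_apply_ne _ hij, Matrix.of_apply]
    exact TP_offblock n t ht hn i.1 j.1 ((bfun_eq_zero n t j.1).mp j.2)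
      (fun hv => hij (Subtype.ext (Fin.ext hv)))

lemma card_band (n a b : ℕ) (hb : b ≤ n) :
    (Finset.univ.filter (fun i : Fin n => a ≤ i.val ∧ i.val < b)).card = b - a := by
  rw [cardFilterFin (fun m => a ≤ m ∧ m < b)]
  have h : (Finset.range n).filter (fun m => a ≤ m ∧ m < b) = Finset.Ico a b := by
    ext m; simp only [Finset.mem_filter, Finset.mem_range, Finset.mem_Ico]; omega
  rw [h, Nat.card_Ico]

lemma block0_charpoly (n t : ℕ) (ht : 3 ≤ t) (hn : t + 2 ≤ n) :
    ((TP n t).toSquareBlock (bfun n t) 0).charpoly =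
      (X - Polynomial.C (-(t:ℝ)⁻¹))^(t-1) * (X - Polynomial.C (0:ℝ))^(n-t-2) := by
  rw [block0_diag n t ht hn,
    Matrix.charpoly_of_upperTriangular _ (Matrix.blockTriangular_diagonal _)]
  have hdg : ∀ i : {a : Fin n // bfun n t a = 0},
      (X - Polynomial.C ((Matrix.diagonal
        (fun i : {a : Fin n // bfun n t a = 0} => Tf n t i.1.val i.1.val)) i i))
      = X - Polynomial.C (Tf n t i.1.val i.1.val) := by
    intro i; rw [Matrix.diagonal_apply_eq]
  rw [Finset.prod_congr rfl (fun i _ => hdg i)]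
  rw [← Finset.prod_subtype (Finset.univ.filter (fun i : Fin n => bfun n t i = 0))
    (fun x => by simp) (fun i : Fin n => X - Polynomial.C (Tf n t i.val i.val))]
  have hsplit : Finset.univ.filter (fun i : Fin n => bfun n t i = 0)
      = Finset.univ.filter (fun i : Fin n => 1 ≤ i.val ∧ i.val < t)
        ∪ Finset.univ.filter (fun i : Fin n => t+1 ≤ i.val ∧ i.val < n-1) := by
    ext i
    have := i.isLt
    simp only [Finset.mem_filter, Finset.mem_union, Finset.mem_univ, true_and, bfun_eq_zero]
    omega
  have hdisj : Disjoint (Finset.univ.filter (fun i : Fin n => 1 ≤ i.val ∧ i.val < t))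
      (Finset.univ.filter (fun i : Fin n => t+1 ≤ i.val ∧ i.val < n-1)) := by
    rw [Finset.disjoint_left]
    intro i h1 h2
    simp only [Finset.mem_filter] at h1 h2
    omega
  rw [hsplit, Finset.prod_union hdisj]
  congr 1
  · rw [Finset.prod_congr rfl (fun i hi => ?_), Finset.prod_const, card_band n 1 t (by omega)]
    simp only [Finset.mem_filter, Finset.mem_univ, true_and] at hi
    rw [Tf_cm_d n t i.val i.val (by omega) (by omega) rfl]
  · rw [Finset.prod_congr rfl (fun i hi => ?_), Finset.prod_const,
      card_band n (t+1) (n-1) (by omega), show n - 1 - (t+1) = n - t - 2 from by omega]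
    simp only [Finset.mem_filter, Finset.mem_univ, true_and] at hi
    rw [Tf_cp n t i.val i.val (by omega) (by omega) (by omega) (by omega)]

def e3 (n t : ℕ) (ht : 3 ≤ t) (hn : t + 2 ≤ n) : {a : Fin n // bfun n t a = 1} ≃ Fin 3 where
  toFun s := if s.1.val = 0 then 0 else if s.1.val = t then 1 else 2
  invFun k :=
    if k.val = 0 then ⟨⟨0, by omega⟩, (bfun_eq_one n t _).mpr (Or.inl rfl)⟩
    else if k.val = 1 then ⟨⟨t, by omega⟩, (bfun_eq_one n t _).mpr (Or.inr (Or.inl rfl))⟩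
    else ⟨⟨n-1, by omega⟩, (bfun_eq_one n t _).mpr (Or.inr (Or.inr rfl))⟩
  left_inv s := by
    dsimp only
    rcases (bfun_eq_one n t s.1).mp s.2 with h | h | h
    · rw [if_pos h, if_pos (show ((0:Fin 3)).val = 0 from rfl)]
      exact Subtype.ext (Fin.ext h.symm)
    · have h0 : ¬(s.1.val = 0) := by omega
      rw [if_neg h0, if_pos h, if_neg (show ¬((1:Fin 3).val = 0) by decide),
        if_pos (show ((1:Fin 3)).val = 1 from rfl)]
      exact Subtype.ext (Fin.ext h.symm)
    · have h0 : ¬(s.1.val = 0) := by omega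
      have h1 : ¬(s.1.val = t) := by omega
      rw [if_neg h0, if_neg h1, if_neg (show ¬((2:Fin 3).val = 0) by decide),
        if_neg (show ¬((2:Fin 3).val = 1) by decide)]
      exact Subtype.ext (Fin.ext h.symm)
  right_inv k := by
    dsimp only
    rcases (show k.val = 0 ∨ k.val = 1 ∨ k.val = 2 by omega) with h | h | h
    · rw [if_pos h]
      dsimp only
      rw [if_pos rfl]
      exact Fin.ext h.symm
    · rw [if_neg (show ¬(k.val = 0) by omega), if_pos h]
      dsimp only
      rw [if_neg (show ¬(t = 0) by omega), if_pos rfl]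
      exact Fin.ext h.symm
    · rw [if_neg (show ¬(k.val = 0) by omega), if_neg (show ¬(k.val = 1) by omega)]
      dsimp only
      rw [if_neg (show ¬(n-1 = 0) by omega), if_neg (show ¬(n-1 = t) by omega)]
      exact Fin.ext h.symm

lemma block1_charpoly (n t : ℕ) (ht : 3 ≤ t) (hn : t + 2 ≤ n) (lp lm : ℝ)
    (hA : 1 + lp + lm = ((t:ℝ)-1)*(t:ℝ)⁻¹)
    (hB : 1*lp + 1*lm + lp*lm = -(((n:ℝ)-(t:ℝ)-1)*((n:ℝ)-1)⁻¹) - ((n:ℝ)-1)⁻¹)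
    (hC : 1*(lp*lm) = -(((t:ℝ)-1)*(t:ℝ)⁻¹*(((n:ℝ)-(t:ℝ)-1)*((n:ℝ)-1)⁻¹))) :
    ((TP n t).toSquareBlock (bfun n t) 1).charpoly
      = (X - Polynomial.C 1) * (X - Polynomial.C lp) * (X - Polynomial.C lm) := by
  rw [← Matrix.charpoly_reindex (e3 n t ht hn) ((TP n t).toSquareBlock (bfun n t) 1)]
  set B3 := Matrix.reindex (e3 n t ht hn) (e3 n t ht hn) ((TP n t).toSquareBlock (bfun n t) 1)
    with hB3
  have h00 : B3 0 0 = ((t:ℝ)-1)*(t:ℝ)⁻¹ := Tf_c0_0 n t 0 0 rfl rfl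
  have h01 : B3 0 1 = 0 := Tf_ct_z n t 0 t (by omega) (by omega) rfl (by omega)
  have h02 : B3 0 2 = 1 := Tf_cl_0 n t 0 (n-1) (by omega) (by omega) (by omega) (by omega) rfl
  have h10 : B3 1 0 = 0 := Tf_c0_z n t t 0 (by omega) (by omega) (by omega) rfl
  have h11 : B3 1 1 = 0 := Tf_ct_z n t t t (by omega) (by omega) rfl (by omega)
  have h12 : B3 1 2 = (n:ℝ)-(t:ℝ)-1 :=
    Tf_cl_t n t t (n-1) (by omega) (by omega) (by omega) (by omega) (by omega) (by omega) rfl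
  have h20 : B3 2 0 = ((n:ℝ)-1)⁻¹ := Tf_c0_ap n t (n-1) 0 (by omega) (by omega) rfl rfl
  have h21 : B3 2 1 = ((n:ℝ)-1)⁻¹ := Tf_ct_ap n t (n-1) t (by omega) (by omega) rfl rfl
  have h22 : B3 2 2 = 0 :=
    Tf_cl_l n t (n-1) (n-1) (by omega) (by omega) (by omega) (by omega) (by omega) (by omega)
      (by omega) (by omega)
  have expand : (X - Polynomial.C (1:ℝ)) * (X - Polynomial.C lp) * (X - Polynomial.C lm)
      = X^3 - Polynomial.C (1 + lp + lm) * X^2 + Polynomial.C (1*lp + 1*lm + lp*lm) * X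
        - Polynomial.C (1*(lp*lm)) := by
    simp only [_root_.map_add, _root_.map_mul, _root_.map_one]
    ring
  rw [expand, hA, hB, hC, Matrix.charpoly, Matrix.det_fin_three]
  rw [charmatrix_apply_eq, charmatrix_apply_eq, charmatrix_apply_eq,
    charmatrix_apply_ne _ _ _ (by decide), charmatrix_apply_ne _ _ _ (by decide),
    charmatrix_apply_ne _ _ _ (by decide), charmatrix_apply_ne _ _ _ (by decide),
    charmatrix_apply_ne _ _ _ (by decide), charmatrix_apply_ne _ _ _ (by decide),
    h00, h01, h02, h10, h11, h12, h20, h21, h22]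
  simp only [map_sub, _root_.map_mul, map_neg, _root_.map_one, _root_.map_zero]
  ring

/-- The pineapple graph on `n` vertices with `t ≥ 3` clique
vertices (threshold string `0 1^{t-1} 0^{n-t-1} 1`) has normalized adjacency
eigenvalues `1`, `0` with multiplicity `n-t-2`, `-1/t` with multiplicity
`t-1`, and the two roots `(1/(2t))[-1 ± √(1 + 4t(t-1)(n-t-1)/(n-1))]`. -/
theorem pineapple_spectrum (n t : ℕ) (ht : 3 ≤ t) (hn : t + 2 ≤ n) :
    let G := thresholdGraph n
      (fun p => decide ((1 ≤ p.val ∧ p.val < t) ∨ p.val = n - 1))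
    (NA G).charpoly.roots =
      {(1 : ℝ)} + Multiset.replicate (n - t - 2) (0 : ℝ) +
        Multiset.replicate (t - 1) (-1 / (t : ℝ)) +
        {(1 / (2 * (t : ℝ))) *
            (-1 + Real.sqrt (1 + 4 * t * ((t : ℝ) - 1) * ((n : ℝ) - t - 1) / ((n : ℝ) - 1))),
          (1 / (2 * (t : ℝ))) *
            (-1 - Real.sqrt (1 + 4 * t * ((t : ℝ) - 1) * ((n : ℝ) - t - 1) / ((n : ℝ) - 1)))} := by
  intro G
  set s := Real.sqrt (1 + 4 * t * ((t : ℝ) - 1) * ((n : ℝ) - t - 1) / ((n : ℝ) - 1)) with hs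
  set lp := (1 / (2 * (t : ℝ))) * (-1 + s) with hlp
  set lm := (1 / (2 * (t : ℝ))) * (-1 - s) with hlm
  have ht3 : (3:ℝ) ≤ (t:ℝ) := by exact_mod_cast ht
  have hnt : (t:ℝ) + 2 ≤ (n:ℝ) := by exact_mod_cast hn
  have htne : (t:ℝ) ≠ 0 := by linarith
  have hn1 : (0:ℝ) < (n:ℝ) - 1 := by linarith
  have hn1e : (n:ℝ) - 1 ≠ 0 := ne_of_gt hn1
  have hDnn : (0:ℝ) ≤ 1 + 4 * t * ((t : ℝ) - 1) * ((n : ℝ) - t - 1) / ((n : ℝ) - 1) := by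
    have h1 : (0:ℝ) ≤ 4 * t * ((t : ℝ) - 1) * ((n : ℝ) - t - 1) := by
      apply mul_nonneg (mul_nonneg (by linarith) (by linarith)) (by linarith)
    have h2 := div_nonneg h1 (le_of_lt hn1)
    linarith
  have hs2 : s^2 = 1 + 4 * t * ((t : ℝ) - 1) * ((n : ℝ) - t - 1) / ((n : ℝ) - 1) := by
    rw [hs]
    exact Real.sq_sqrt hDnn
  have hsum : lp + lm = -(t:ℝ)⁻¹ := by
    rw [hlp, hlm]
    field_simp
    ring
  have hA : 1 + lp + lm = ((t:ℝ)-1)*(t:ℝ)⁻¹ := by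
    rw [hlp, hlm]
    field_simp
    ring
  have hprod : lp * lm = -(((t:ℝ)-1)*(t:ℝ)⁻¹*(((n:ℝ)-(t:ℝ)-1)*((n:ℝ)-1)⁻¹)) := by
    rw [hlp, hlm]
    have hexp : (1 / (2 * (t : ℝ))) * (-1 + s) * ((1 / (2 * (t : ℝ))) * (-1 - s))
        = (1 - s^2)/(4*(t:ℝ)^2) := by
      field_simp
      ring
    rw [hexp, hs2]
    field_simp
    ring
  have hC : 1*(lp * lm) = -(((t:ℝ)-1)*(t:ℝ)⁻¹*(((n:ℝ)-(t:ℝ)-1)*((n:ℝ)-1)⁻¹)) := by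
    rw [one_mul, hprod]
  have hB : 1*lp + 1*lm + lp*lm = -(((n:ℝ)-(t:ℝ)-1)*((n:ℝ)-1)⁻¹) - ((n:ℝ)-1)⁻¹ := by
    rw [one_mul, one_mul, hsum, hprod]
    field_simp
    ring
  have hfinal : (NA G).charpoly =
      ((({(1 : ℝ)} + Multiset.replicate (n - t - 2) (0 : ℝ) +
        Multiset.replicate (t - 1) (-1 / (t : ℝ)) + {lp, lm}) : Multiset ℝ).map
          (fun a => X - Polynomial.C a)).prod := by
    show (NA (thresholdGraph n (pb n t))).charpoly = _
    rw [charpoly_NA n t ht hn, charpoly_TP_split n t ht hn, block0_charpoly n t ht hn,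
      block1_charpoly n t ht hn lp lm hA hB hC]
    simp only [Multiset.map_add, Multiset.prod_add, Multiset.map_replicate,
      Multiset.prod_replicate, Multiset.map_singleton, Multiset.prod_singleton,
      Multiset.insert_eq_cons, Multiset.map_cons, Multiset.prod_cons]
    rw [show (-1/(t:ℝ)) = -(t:ℝ)⁻¹ by ring]
    ring
  rw [hfinal, Polynomial.roots_multiset_prod_X_sub_C]
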